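/- Let G be a DAG admitting the partial ordering X ≺ Y and P faithful to G. For any j ∈ Y, if k ∈ S^(0)_j ∩ S^(-j)_j (i.e., k → j appears in both H^(0) and H^(-j)) but k is not a parent of j in G, then both of the following hold: there exists a directed path k → j' → ⋯ → j with j' ∈ Y, and j and k have a common child in G. -/

import Mathlib

/-- Directed reachability in a digraph (reflexive-transitive closure of the edge relation). -/
def Reaches {V : Type*} (G : V → V → Prop) : V → V → Prop := Relation.ReflTransGen G

/-- A digraph is acyclic if no vertex lies on a directed cycle. -/
def Acyclic {V : Type*} (G : V → V → Prop) : Prop := ∀ v, ¬ Relation.TransGen G v v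

/-- `p` is an (undirected) path from `a` to `b` in the digraph `G`. -/
def IsTrail {V : Type*} (G : V → V → Prop) (a b : V) (p : List V) : Prop :=
  p.Chain' (fun x y => G x y ∨ G y x) ∧ p.head? = some a ∧ p.getLast? = some b ∧ p.Nodup

/-- Consecutive triples of a list. -/
def triples {V : Type*} : List V → List (V × V × V)
  | x :: y :: z :: r => (x, y, z) :: triples (y :: z :: r)
  | _ => []

/-- A triple `(x, y, z)` on a path is blocked by `S` if `y` is a collider none of whose
descendants lies in `S`, or `y` is a non-collider belonging to `S`. -/
def BlockedTriple {V : Type*} [DecidableEq V] (G : V → V → Prop) (S : Finset V)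
    (t : V × V × V) : Prop :=
  (G t.1 t.2.1 ∧ G t.2.2 t.2.1 ∧ ∀ d, Reaches G t.2.1 d → d ∉ S)
  ∨ (¬ (G t.1 t.2.1 ∧ G t.2.2 t.2.1) ∧ t.2.1 ∈ S)

/-- A path is blocked by `S` if some internal triple is blocked. -/
def Blocked {V : Type*} [DecidableEq V] (G : V → V → Prop) (S : Finset V) (p : List V) : Prop :=
  ∃ t ∈ triples p, BlockedTriple G S t

/-- `S` d-separates `a` and `b` in `G` if every path between them is blocked. -/
def DSep {V : Type*} [DecidableEq V] (G : V → V → Prop) (S : Finset V) (a b : V) : Prop :=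
  ∀ p : List V, IsTrail G a b p → Blocked G S p

theorem triples_cons {V : Type*} (x y z : V) (r : List V) :
    triples (x :: y :: z :: r) = (x, y, z) :: triples (y :: z :: r) := rfl


/-- in a two-layer DAG `Xs ≺ Ys` with a Markov and faithful distribution,
if `k ∈ S⁰_j ∩ S^(-j)_j` (i.e. the edge `k → j` appears in both `H⁰` and `H^(-j)`) but
`k` is not a parent of `j`, then there is a directed path `k → j' → ⋯ → j` with
`j' ∈ Ys`, and `j` and `k` have a common child in `G`. -/
theorem intersection_characterization
    {V : Type*} [Fintype V] [DecidableEq V]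
    (G : V → V → Prop) (Indep : V → V → Finset V → Prop)
    (Xs Ys : Finset V)
    (hpart : ∀ v, v ∈ Xs ∨ v ∈ Ys) (hdisj : Disjoint Xs Ys)
    (horder : ∀ a ∈ Ys, ∀ b ∈ Xs, ¬ G a b)
    (hacy : Acyclic G)
    (hMarkov : ∀ a b S, DSep G S a b → Indep a b S)
    (hFaithful : ∀ a b S, Indep a b S → DSep G S a b)
    (k j : V) (hk : k ∈ Xs) (hj : j ∈ Ys)
    (hS0 : ¬ Indep k j (Xs \ {k}))
    (hSmj : ¬ Indep k j ((Xs \ {k}) ∪ (Ys \ {j})))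
    (hnotpa : ¬ G k j) :
    (∃ j' ∈ Ys, G k j' ∧ Relation.ReflTransGen (fun a b => G a b ∧ b ∈ Ys) j' j) ∧
    (∃ c, G j c ∧ G k c) := by
  classical
  have hne : k ≠ j := fun h => Finset.disjoint_left.mp hdisj hk (h ▸ hj)
  have hreach : ∀ a, a ∈ Ys → ∀ d, Reaches G a d → d ∈ Ys := by
    intro a ha d hd
    induction hd with
    | refl => exact ha
    | tail _ hbc ih =>
      rcases hpart _ with hc | hc
      · exact absurd hbc (horder _ ih _ hc)
      · exact hc
  constructor
  · -- directed path through Ys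
    have hnd : ¬ DSep G (Xs \ {k}) k j := fun h => hS0 (hMarkov _ _ _ h)
    simp only [DSep, not_forall] at hnd
    obtain ⟨p, htr, hbl⟩ := hnd
    simp only [Blocked, not_exists, not_and] at hbl
    obtain ⟨hchain, hhead, hlast, hnodup⟩ := htr
    have aux1 : ∀ (q : List V) (prev a : V), G prev a → a ∈ Ys →
        List.Chain' (fun x y => G x y ∨ G y x) (prev :: a :: q) →
        (∀ t ∈ triples (prev :: a :: q), ¬ BlockedTriple G (Xs \ {k}) t) →
        (a :: q).getLast? = some j →
        Relation.ReflTransGen (fun a b => G a b ∧ b ∈ Ys) a j := by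
      intro q
      induction q with
      | nil =>
        intro prev a _ _ _ _ hl
        have : a = j := by simpa using hl
        subst this
        exact Relation.ReflTransGen.refl
      | cons b q' ih =>
        intro prev a hpa ha hch hub hl
        have htrip : ¬ BlockedTriple G (Xs \ {k}) (prev, a, b) :=
          hub _ (by rw [triples_cons]; exact List.mem_cons_self)
        have hnba : ¬ G b a := by
          intro hba
          exact htrip (Or.inl ⟨hpa, hba, fun d hd hdS =>
            Finset.disjoint_left.mp hdisj (Finset.mem_sdiff.mp hdS).1 (hreach a ha d hd)⟩)
        have hab : G a b := by
          rcases (List.isChain_cons_cons.mp (List.isChain_cons_cons.mp hch).2).1 with h | h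
          · exact h
          · exact absurd h hnba
        have hb : b ∈ Ys := by
          rcases hpart b with hb | hb
          · exact absurd hab (horder _ ha _ hb)
          · exact hb
        have := ih a b hab hb (List.isChain_cons_cons.mp hch).2
          (fun t ht => hub t (by rw [triples_cons]; exact List.mem_cons_of_mem _ ht))
          (by rw [List.getLast?_cons_cons] at hl; exact hl)
        exact Relation.ReflTransGen.head ⟨hab, hb⟩ this
    match p, hhead with
    | (a :: rest), hhead =>
    have hak : k = a := (by simpa using hhead : a = k).symm
    subst hak
    match rest, hlast with
    | [], hlast => exact absurd (by simpa using hlast) hne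
    | [v1], hlast =>
      have hv1 : v1 = j := by simpa using hlast
      subst hv1
      rcases (List.isChain_cons_cons.mp hchain).1 with h | h
      · exact absurd h hnotpa
      · exact absurd h (horder _ hj _ hk)
    | (v1 :: w :: rest3), hlast =>
      have hjmem : j ∈ w :: rest3 :=
        List.mem_of_mem_getLast? (by rw [List.getLast?_cons_cons, List.getLast?_cons_cons] at hlast; exact hlast)
      have hv1k : v1 ≠ k := by
        intro h; subst h
        exact (List.nodup_cons.mp hnodup).1 (List.mem_cons_self)
      have hv1j : v1 ≠ j := by
        intro h
        exact (List.nodup_cons.mp (List.nodup_cons.mp hnodup).2).1 (h ▸ hjmem)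
      rcases hpart v1 with hv1X | hv1Y
      · -- v1 ∈ Xs : derive a contradiction
        exfalso
        have hv1S : v1 ∈ Xs \ {k} := Finset.mem_sdiff.mpr ⟨hv1X, by simp [hv1k]⟩
        have hcol : G k v1 ∧ G w v1 := by
          by_contra hc
          exact hbl (k, v1, w) (by rw [triples_cons]; exact List.mem_cons_self)
            (Or.inr ⟨hc, hv1S⟩)
        match rest3, hlast with
        | [], hlast =>
          have hwj : w = j := by have := hjmem; simp at this; exact this.symm
          subst hwj
          exact horder _ hj _ hv1X hcol.2
        | (z :: r4), hlast =>
          rcases hpart w with hwX | hwY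
          · have hwk : w ≠ k := by
              intro h; subst h
              exact (List.nodup_cons.mp hnodup).1 (List.mem_cons_of_mem _ (List.mem_cons_self))
            have hwS : w ∈ Xs \ {k} := Finset.mem_sdiff.mpr ⟨hwX, by simp [hwk]⟩
            have hcol2 : G v1 w ∧ G z w := by
              by_contra hc
              exact hbl (v1, w, z)
                (by rw [triples_cons, triples_cons]; exact List.mem_cons_of_mem _ (List.mem_cons_self))
                (Or.inr ⟨hc, hwS⟩)
            exact hacy v1 (Relation.TransGen.head hcol2.1 (Relation.TransGen.single hcol.2))
          · exact horder _ hwY _ hv1X hcol.2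
      · -- v1 ∈ Ys : build the path
        have hkv1 : G k v1 := by
          rcases (List.isChain_cons_cons.mp hchain).1 with h | h
          · exact h
          · exact absurd h (horder _ hv1Y _ hk)
        exact ⟨v1, hv1Y, hkv1,
          aux1 (w :: rest3) k v1 hkv1 hv1Y hchain (fun t ht => hbl t ht)
            (by rw [List.getLast?_cons_cons] at hlast; exact hlast)⟩
  · -- common child
    have hnd : ¬ DSep G ((Xs \ {k}) ∪ (Ys \ {j})) k j := fun h => hSmj (hMarkov _ _ _ h)
    simp only [DSep, not_forall] at hnd
    obtain ⟨p, htr, hbl⟩ := hnd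
    simp only [Blocked, not_exists, not_and] at hbl
    obtain ⟨hchain, hhead, hlast, hnodup⟩ := htr
    match p, hhead with
    | (a :: rest), hhead =>
    have hak : k = a := (by simpa using hhead : a = k).symm
    subst hak
    match rest, hlast with
    | [], hlast => exact absurd (by simpa using hlast) hne
    | [v1], hlast =>
      have hv1 : v1 = j := by simpa using hlast
      subst hv1
      rcases (List.isChain_cons_cons.mp hchain).1 with h | h
      · exact absurd h hnotpa
      · exact absurd h (horder _ hj _ hk)
    | (v1 :: w :: rest3), hlast =>
      have hjmem : j ∈ w :: rest3 :=
        List.mem_of_mem_getLast? (by rw [List.getLast?_cons_cons, List.getLast?_cons_cons] at hlast; exact hlast)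
      have hv1k : v1 ≠ k := by
        intro h; subst h
        exact (List.nodup_cons.mp hnodup).1 (List.mem_cons_self)
      have hv1j : v1 ≠ j := by
        intro h
        exact (List.nodup_cons.mp (List.nodup_cons.mp hnodup).2).1 (h ▸ hjmem)
      have hv1S : v1 ∈ (Xs \ {k}) ∪ (Ys \ {j}) := by
        rcases hpart v1 with h | h
        · exact Finset.mem_union_left _ (Finset.mem_sdiff.mpr ⟨h, by simp [hv1k]⟩)
        · exact Finset.mem_union_right _ (Finset.mem_sdiff.mpr ⟨h, by simp [hv1j]⟩)
      have hcol : G k v1 ∧ G w v1 := by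
        by_contra hc
        exact hbl (k, v1, w) (by rw [triples_cons]; exact List.mem_cons_self)
          (Or.inr ⟨hc, hv1S⟩)
      match rest3, hlast with
      | [], hlast =>
        have hwj : w = j := by have := hjmem; simp at this; exact this.symm
        subst hwj
        exact ⟨v1, hcol.2, hcol.1⟩
      | (z :: r4), hlast =>
        exfalso
        have hwk : w ≠ k := by
          intro h; subst h
          exact (List.nodup_cons.mp hnodup).1 (List.mem_cons_of_mem _ (List.mem_cons_self))
        have hwj : w ≠ j := by
          intro h
          have : w ∈ z :: r4 := by
            have := List.mem_of_mem_getLast?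
              (by
                rw [List.getLast?_cons_cons, List.getLast?_cons_cons, List.getLast?_cons_cons] at hlast
                exact hlast)
            exact h ▸ this
          exact (List.nodup_cons.mp (List.nodup_cons.mp (List.nodup_cons.mp hnodup).2).2).1 this
        have hwS : w ∈ (Xs \ {k}) ∪ (Ys \ {j}) := by
          rcases hpart w with h | h
          · exact Finset.mem_union_left _ (Finset.mem_sdiff.mpr ⟨h, by simp [hwk]⟩)
          · exact Finset.mem_union_right _ (Finset.mem_sdiff.mpr ⟨h, by simp [hwj]⟩)
        have hcol2 : G v1 w ∧ G z w := by
          by_contra hc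
          exact hbl (v1, w, z)
            (by rw [triples_cons, triples_cons]; exact List.mem_cons_of_mem _ (List.mem_cons_self))
            (Or.inr ⟨hc, hwS⟩)
        exact hacy v1 (Relation.TransGen.head hcol2.1 (Relation.TransGen.single hcol.2))
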